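/- arXiv:2101.07363 — 7 statements merged into one kernel-verified Lean document; each statement's English description precedes it below -/
import Mathlib

section
/- If T is a nilpotent operator of order r > 2 (T^r = 0, T^{r-1} ≠ 0), then T is (A,(2r−2, 2r−1))-isosymmetric for any positive operator A, i.e. Ω_A^{2r−2,2r−1}(T) = 0. -/
open ContinuousLinearMap

/-- `Ω_A^{m,n}(T)` given by the double sum. -/
noncomputable def Omega {H : Type*} [NormedAddCommGroup H] [InnerProductSpace ℂ H]
    [CompleteSpace H] (A T : H →L[ℂ] H) (m n : ℕ) : H →L[ℂ] H :=
  ∑ j ∈ Finset.range (m + 1), ∑ k ∈ Finset.range (n + 1),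
    ((-1 : ℂ) ^ (m + n - (j + k)) * (m.choose j : ℂ) * (n.choose k : ℂ)) •
      (((adjoint T) ^ (k + j)) ∘L A ∘L (T ^ (n + j - k)))

theorem nilpotent_isosymmetric {H : Type*} [NormedAddCommGroup H] [InnerProductSpace ℂ H]
    [CompleteSpace H] (A T : H →L[ℂ] H) (hA : A.IsPositive) (r : ℕ) (hr : 2 < r)
    (hTr : T ^ r = 0) (hTr1 : T ^ (r - 1) ≠ 0) :
    Omega A T (2 * r - 2) (2 * r - 1) = 0 := by
  unfold Omega
  apply Finset.sum_eq_zero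
  intro j hj
  apply Finset.sum_eq_zero
  intro k hk
  simp only [Finset.mem_range, Nat.lt_succ_iff] at hj hk
  rcases le_or_gt r (k + j) with h | h
  · have h1 : (adjoint T) ^ (k + j) = 0 := by
      have : T ^ (k + j) = 0 := pow_eq_zero_of_le h hTr
      calc (adjoint T) ^ (k + j) = star T ^ (k + j) := rfl
        _ = star (T ^ (k + j)) := (star_pow T (k + j)).symm
        _ = 0 := by rw [this, star_zero]
    simp [h1]
  · have h2 : T ^ (2 * r - 1 + j - k) = 0 := by
      apply pow_eq_zero_of_le _ hTr
      omega
    simp [h2]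
end

section
/- If T is invertible and (A,(m,n))-isosymmetric, then T^{-1} is (A,(m,n))-isosymmetric. -/
open ContinuousLinearMap

private lemma pow_mul_pow_self_eq_one {M : Type*} [Monoid M] {t s : M} (hts : t * s = 1) :
    ∀ a : ℕ, t ^ a * s ^ a = 1
  | 0 => by simp
  | (a + 1) => by
    rw [pow_succ t, pow_succ' s, mul_assoc, ← mul_assoc t s, hts, one_mul,
      pow_mul_pow_self_eq_one hts a]

private lemma pow_mul_pow_cancel {M : Type*} [Monoid M] {t s : M} (hts : t * s = 1)
    {a b : ℕ} (h : a ≤ b) : t ^ a * s ^ b = s ^ (b - a) := by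
  conv_lhs => rw [show b = a + (b - a) by omega, pow_add, ← mul_assoc,
    pow_mul_pow_self_eq_one hts a, one_mul]

private lemma pow_mul_pow_cancel' {M : Type*} [Monoid M] {t s : M} (hst : s * t = 1)
    {a b : ℕ} (h : a ≤ b) : s ^ b * t ^ a = s ^ (b - a) := by
  conv_lhs => rw [show b = (b - a) + a by omega, pow_add, mul_assoc,
    pow_mul_pow_self_eq_one hst a, mul_one]

theorem inv_isosymmetric {H : Type*} [NormedAddCommGroup H] [InnerProductSpace ℂ H]
    [CompleteSpace H] (A T S : H →L[ℂ] H) (hA : A.IsPositive)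
    (hTS : T ∘L S = 1) (hST : S ∘L T = 1) (m n : ℕ)
    (h : Omega A T m n = 0) : Omega A S m n = 0 := by
  have hTS' : T * S = 1 := hTS
  have hST' : S * T = 1 := hST
  have hadST : adjoint S * adjoint T = 1 := by
    rw [show adjoint S * adjoint T = adjoint (T ∘L S) from (adjoint_comp T S).symm, hTS]
    simp [← star_eq_adjoint]
  have hadTS : adjoint T * adjoint S = 1 := by
    rw [show adjoint T * adjoint S = adjoint (S ∘L T) from (adjoint_comp S T).symm, hST]
    simp [← star_eq_adjoint]
  have key : Omega A S m n =
      ((-1 : ℂ) ^ (m + n)) •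
        (((adjoint S) ^ (m + n)) ∘L (Omega A T m n) ∘L (S ^ (m + n))) := by
    unfold Omega
    simp only [← ContinuousLinearMap.mul_def, Finset.mul_sum, Finset.sum_mul,
      Finset.smul_sum, mul_smul_comm, smul_mul_assoc]
    rw [← Finset.sum_range_reflect]
    refine Finset.sum_congr rfl fun j hj => ?_
    rw [← Finset.sum_range_reflect]
    refine Finset.sum_congr rfl fun k hk => ?_
    have hj' : j ≤ m := by simpa using Nat.lt_succ_iff.mp (Finset.mem_range.mp hj)
    have hk' : k ≤ n := by simpa using Nat.lt_succ_iff.mp (Finset.mem_range.mp hk)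
    have e1 : m + 1 - 1 - j = m - j := by omega
    have e2 : n + 1 - 1 - k = n - k := by omega
    rw [e1, e2, smul_smul]
    have hop : (adjoint S) ^ (m + n) * ((adjoint T) ^ (k + j) * (A * (T ^ (n + j - k) *
        S ^ (m + n)))) = (adjoint S) ^ (m + n - (k + j)) * (A * S ^ (m + n - (n + j - k))) := by
      have c1 : (adjoint S) ^ (m + n) * (adjoint T) ^ (k + j) =
          (adjoint S) ^ (m + n - (k + j)) :=
        pow_mul_pow_cancel' hadST (by omega)
      have c2 : T ^ (n + j - k) * S ^ (m + n) = S ^ (m + n - (n + j - k)) :=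
        pow_mul_pow_cancel hTS' (by omega)
      rw [c2, ← mul_assoc, c1]
    simp only [mul_assoc]
    rw [hop]
    have ee1 : (n - k) + (m - j) = m + n - (k + j) := by omega
    have ee2 : n + (m - j) - (n - k) = m + n - (n + j - k) := by omega
    rw [ee1, ee2]
    congr 1
    have s1 : m + n - (m - j + (n - k)) = j + k := by omega
    have s2 : (m + n) + (m + n - (j + k)) = (j + k) + 2 * (m + n - (j + k)) := by omega
    have s3 : (-1 : ℂ) ^ (m + n) * (-1) ^ (m + n - (j + k)) = (-1) ^ (j + k) := by
      rw [← pow_add, s2, pow_add, pow_mul]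
      norm_num
    rw [s1, Nat.choose_symm hj', Nat.choose_symm hk', ← s3]
    ring
  rw [key, h]
  simp
end

section
/- If T is (A,(m,n))-isosymmetric, then T^k is (A,(m,n))-isosymmetric for every positive integer k. -/
open ContinuousLinearMap

namespace PowIsoAux

open MvPolynomial

variable {H : Type*} [NormedAddCommGroup H] [InnerProductSpace ℂ H] [CompleteSpace H]

/-- The hereditary functional calculus: `x^a y^b ↦ (T*)^b A T^a`, extended linearly. -/
noncomputable def Phi (A T : H →L[ℂ] H) : MvPolynomial (Fin 2) ℂ →ₗ[ℂ] (H →L[ℂ] H) :=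
  (Finsupp.lsum ℂ fun (d : Fin 2 →₀ ℕ) => LinearMap.toSpanSingleton ℂ _ ((adjoint T) ^ (d 1) * A * T ^ (d 0)))
    ∘ₗ (AddMonoidAlgebra.coeffLinearEquiv ℂ).toLinearMap

lemma Phi_monomial (A T : H →L[ℂ] H) (d : Fin 2 →₀ ℕ) (c : ℂ) :
    Phi A T (monomial d c) = c • ((adjoint T) ^ (d 1) * A * T ^ (d 0)) := by
  show ((Finsupp.single d c : (Fin 2 →₀ ℕ) →₀ ℂ).sum
    fun d c => c • ((adjoint T) ^ (d 1) * A * T ^ (d 0))) = _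
  rw [Finsupp.sum_single_index (by simp)]

lemma Phi_X0_mul (A T : H →L[ℂ] H) (p : MvPolynomial (Fin 2) ℂ) :
    Phi A T (X 0 * p) = Phi A T p * T := by
  induction p using MvPolynomial.induction_on' with
  | monomial d c =>
    rw [X, monomial_mul, one_mul, Phi_monomial, Phi_monomial]
    simp only [Finsupp.add_apply, Finsupp.single_apply]
    norm_num
    rw [add_comm 1 (d 0), pow_succ]
    simp [mul_assoc]
  | add p q hp hq =>
    rw [mul_add, map_add, map_add, hp, hq, add_mul]

lemma Phi_X1_mul (A T : H →L[ℂ] H) (p : MvPolynomial (Fin 2) ℂ) :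
    Phi A T (X 1 * p) = adjoint T * Phi A T p := by
  induction p using MvPolynomial.induction_on' with
  | monomial d c =>
    rw [X, monomial_mul, one_mul, Phi_monomial, Phi_monomial]
    simp only [Finsupp.add_apply, Finsupp.single_apply]
    norm_num
    rw [add_comm 1 (d 1), pow_succ']
    simp [mul_assoc]
  | add p q hp hq =>
    rw [mul_add, map_add, map_add, hp, hq, mul_add]

lemma Phi_X_mul_zero (A T : H →L[ℂ] H) (i : Fin 2) (p : MvPolynomial (Fin 2) ℂ)
    (hp : Phi A T p = 0) : Phi A T (X i * p) = 0 := by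
  obtain rfl | rfl : i = 0 ∨ i = 1 := by revert i; decide
  · rw [Phi_X0_mul, hp, zero_mul]
  · rw [Phi_X1_mul, hp, mul_zero]

lemma Phi_mul_zero (A T : H →L[ℂ] H) (p : MvPolynomial (Fin 2) ℂ)
    (hp : Phi A T p = 0) (q : MvPolynomial (Fin 2) ℂ) : Phi A T (q * p) = 0 := by
  induction q using MvPolynomial.induction_on with
  | C a =>
    rw [← smul_eq_C_mul, map_smul, hp, smul_zero]
  | add q r hq hr => rw [add_mul, map_add, hq, hr, add_zero]
  | mul_X q i hq =>
    have h : q * X i * p = X i * (q * p) := by ring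
    rw [h]
    exact Phi_X_mul_zero A T i (q * p) hq

lemma monomial_two (a b : ℕ) (c : ℂ) :
    (monomial (Finsupp.single 0 a + Finsupp.single 1 b) c : MvPolynomial (Fin 2) ℂ)
      = C c * X 0 ^ a * X 1 ^ b := by
  rw [X_pow_eq_monomial, X_pow_eq_monomial, C_apply, monomial_mul, monomial_mul,
    mul_one, mul_one, zero_add]

lemma expand_monomial' (k : ℕ) (hk : k ≠ 0) (d : Fin 2 →₀ ℕ) (c : ℂ) :
    expand k (monomial d c : MvPolynomial (Fin 2) ℂ) = monomial (k • d) c := by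
  rw [expand_monomial, monomial_eq]

lemma Phi_pow (A T : H →L[ℂ] H) (k : ℕ) (hk : k ≠ 0) (p : MvPolynomial (Fin 2) ℂ) :
    Phi A (T ^ k) p = Phi A T (expand k p) := by
  induction p using MvPolynomial.induction_on' with
  | monomial d c =>
    rw [expand_monomial' k hk, Phi_monomial, Phi_monomial]
    have ha : adjoint (T ^ k) = (adjoint T) ^ k := by
      rw [← star_eq_adjoint, ← star_eq_adjoint, star_pow]
    rw [ha, ← pow_mul, ← pow_mul, Finsupp.smul_apply, Finsupp.smul_apply,
      smul_eq_mul, smul_eq_mul]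
  | add p q hp hq => rw [map_add, map_add, hp, hq, map_add]

lemma Omega_eq_Phi (A T : H →L[ℂ] H) (m n : ℕ) :
    Omega A T m n = Phi A T ((X 1 * X 0 - 1) ^ m * (X 1 - X 0) ^ n) := by
  rw [sub_eq_add_neg ((X 1 : MvPolynomial (Fin 2) ℂ) * X 0) 1, add_pow,
      sub_eq_add_neg (X 1 : MvPolynomial (Fin 2) ℂ) (X 0), add_pow, Finset.sum_mul_sum,
      map_sum, Omega]
  apply Finset.sum_congr rfl; intro j hj
  rw [map_sum]
  apply Finset.sum_congr rfl; intro l hl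
  have hjm : j ≤ m := Nat.lt_succ_iff.mp (Finset.mem_range.mp hj)
  have hln : l ≤ n := Nat.lt_succ_iff.mp (Finset.mem_range.mp hl)
  obtain ⟨a, rfl⟩ : ∃ a, m = j + a := ⟨m - j, by omega⟩
  obtain ⟨b, rfl⟩ : ∃ b, n = l + b := ⟨n - l, by omega⟩
  have e1 : j + a + (l + b) - (j + l) = a + b := by omega
  have e2 : l + b + j - l = j + b := by omega
  have e3 : j + a - j = a := by omega
  have e4 : l + b - l = b := by omega
  rw [e1, e2, e3, e4]
  have key : ((X 1 * X 0 : MvPolynomial (Fin 2) ℂ) ^ j * (-1) ^ a *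
        ((j+a).choose j : MvPolynomial (Fin 2) ℂ)) *
      ((X 1 : MvPolynomial (Fin 2) ℂ) ^ l * (-X 0) ^ b *
        ((l+b).choose l : MvPolynomial (Fin 2) ℂ)) =
      monomial (Finsupp.single 0 (j + b) + Finsupp.single 1 (l + j))
        ((-1 : ℂ) ^ (a + b) * ((j+a).choose j : ℂ) * ((l+b).choose l : ℂ)) := by
    rw [monomial_two]
    simp only [map_mul, map_pow, map_neg, map_one, C_eq_coe_nat]
    ring
  rw [key, Phi_monomial]
  have d1 : ((Finsupp.single (0:Fin 2) (j + b) +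
      Finsupp.single (1:Fin 2) (l + j) : Fin 2 →₀ ℕ)) 1 = l + j := by simp
  have d0 : ((Finsupp.single (0:Fin 2) (j + b) +
      Finsupp.single (1:Fin 2) (l + j) : Fin 2 →₀ ℕ)) 0 = j + b := by simp
  rw [d1, d0]
  rfl

end PowIsoAux

theorem pow_isosymmetric {H : Type*} [NormedAddCommGroup H] [InnerProductSpace ℂ H]
    [CompleteSpace H] (A T : H →L[ℂ] H) (hA : A.IsPositive) (m n k : ℕ) (hk : 1 ≤ k)
    (h : Omega A T m n = 0) : Omega A (T ^ k) m n = 0 := by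
  open MvPolynomial PowIsoAux in
  have hT : Phi A T ((X 1 * X 0 - 1) ^ m * (X 1 - X 0) ^ n) = 0 := by
    rw [← Omega_eq_Phi]; exact h
  obtain ⟨s, hs⟩ : ((X 1 * X 0 - 1 : MvPolynomial (Fin 2) ℂ) ^ m * (X 1 - X 0) ^ n) ∣
      expand k ((X 1 * X 0 - 1 : MvPolynomial (Fin 2) ℂ) ^ m * (X 1 - X 0) ^ n) := by
    simp only [map_mul, map_pow, map_sub, map_one, expand_X]
    refine mul_dvd_mul (pow_dvd_pow_of_dvd ?_ m) (pow_dvd_pow_of_dvd ?_ n)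
    · rw [show (X 1 : MvPolynomial (Fin 2) ℂ) ^ k * X 0 ^ k = (X 1 * X 0) ^ k from
        (mul_pow _ _ _).symm]
      simpa using sub_dvd_pow_sub_pow (X 1 * X 0 : MvPolynomial (Fin 2) ℂ) 1 k
    · exact sub_dvd_pow_sub_pow _ _ k
  rw [Omega_eq_Phi, Phi_pow A T k (by omega), hs, mul_comm]
  exact Phi_mul_zero A T _ hT s
end

section
/- Let R₁, R₂, S₁, S₂ be bounded operators with R₁R₂ = R₂R₁ and S₁S₂ = S₂S₁. If Σ_{i=0}^m (-1)^{m−i} binom(m,i) R₁^i A S₁^i = 0 (R₁ is a left (A,m)-inverse of S₁) and Σ_{j=0}^n (-1)^{n−j} binom(n,j) R₂^j A S₂^j = 0 (R₂ is a left (A,n)-inverse of S₂), then Σ_{s=0}^{m+n−1} (-1)^{m+n−1−s} binom(m+n−1,s) (R₁R₂)^s A (S₁S₂)^s = 0, i.e. R₁R₂ is a left (A,m+n−1)-inverse of S₁S₂. -/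
open ContinuousLinearMap Finset

section Diag

variable {M : Type*} [AddCommGroup M] [Module ℂ M]

private def shiftL : Module.End ℂ (ℕ → ℕ → M) where
  toFun f := fun p q => f (p + 1) q
  map_add' _ _ := rfl
  map_smul' _ _ := rfl

private def shiftR : Module.End ℂ (ℕ → ℕ → M) where
  toFun f := fun p q => f p (q + 1)
  map_add' _ _ := rfl
  map_smul' _ _ := rfl

private lemma shiftL_pow (k : ℕ) (f : ℕ → ℕ → M) (p q : ℕ) :
    ((shiftL ^ k : Module.End ℂ (ℕ → ℕ → M)) f) p q = f (p + k) q := by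
  induction k generalizing f p q with
  | zero => simp
  | succ k ih =>
    rw [pow_succ']  -- shiftL^(k+1) = shiftL * shiftL^k
    rw [Module.End.mul_apply]
    show ((shiftL ^ k : Module.End ℂ (ℕ → ℕ → M)) f) (p + 1) q = f (p + (k + 1)) q
    rw [ih]
    congr 1
    omega

private lemma shiftR_pow (k : ℕ) (f : ℕ → ℕ → M) (p q : ℕ) :
    ((shiftR ^ k : Module.End ℂ (ℕ → ℕ → M)) f) p q = f p (q + k) := by
  induction k generalizing f p q with
  | zero => simp
  | succ k ih =>
    rw [pow_succ', Module.End.mul_apply]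
    show ((shiftR ^ k : Module.End ℂ (ℕ → ℕ → M)) f) p (q + 1) = f p (q + (k + 1))
    rw [ih]
    congr 1
    omega

private lemma shiftLR_pow (k : ℕ) (f : ℕ → ℕ → M) (p q : ℕ) :
    (((shiftL * shiftR) ^ k : Module.End ℂ (ℕ → ℕ → M)) f) p q = f (p + k) (q + k) := by
  induction k generalizing f p q with
  | zero => simp
  | succ k ih =>
    rw [pow_succ', Module.End.mul_apply, Module.End.mul_apply]
    show (((shiftL * shiftR) ^ k : Module.End ℂ (ℕ → ℕ → M)) _) (p + 1) (q + 1)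
        = f (p + (k + 1)) (q + (k + 1))
    rw [ih]
    show f ((p + 1) + k) ((q + 1) + k) = _
    congr 1 <;> omega

private lemma end_neg_one_pow_apply {V : Type*} [AddCommGroup V] [Module ℂ V]
    (j : ℕ) (x : V) : (((-1 : Module.End ℂ V)) ^ j) x = ((-1 : ℂ) ^ j) • x := by
  have h1 : (-1 : Module.End ℂ V) = (-1 : ℂ) • (1 : Module.End ℂ V) := by
    ext v; simp
  rw [h1, smul_pow, one_pow, LinearMap.smul_apply, Module.End.one_apply]

private lemma end_sub_one_pow_apply {V : Type*} [AddCommGroup V] [Module ℂ V]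
    (T : Module.End ℂ V) (k : ℕ) (f : V) :
    ((T - 1) ^ k) f = ∑ i ∈ range (k + 1),
      ((-1 : ℂ) ^ (k - i) * (k.choose i : ℂ)) • (T ^ i) f := by
  rw [sub_eq_add_neg, (Commute.neg_one_right T).add_pow, LinearMap.sum_apply]
  refine Finset.sum_congr rfl fun i _ => ?_
  rw [Module.End.mul_apply, Module.End.mul_apply, Module.End.natCast_apply,
    ← Nat.cast_smul_eq_nsmul ℂ, end_neg_one_pow_apply, map_smul, map_smul, smul_smul]

private theorem diag_key (g : ℕ → ℕ → M) (m n : ℕ) (hm : 1 ≤ m) (hn : 1 ≤ n)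
    (hA : ∀ p q, ∑ i ∈ range (m + 1),
        ((-1 : ℂ) ^ (m - i) * (m.choose i : ℂ)) • g (p + i) q = 0)
    (hB : ∀ p q, ∑ j ∈ range (n + 1),
        ((-1 : ℂ) ^ (n - j) * (n.choose j : ℂ)) • g p (q + j) = 0) :
    ∑ s ∈ range (m + n - 1 + 1),
      ((-1 : ℂ) ^ (m + n - 1 - s) * ((m + n - 1).choose s : ℂ)) • g s s = 0 := by
  set E : Module.End ℂ (ℕ → ℕ → M) := shiftL with hE
  set F : Module.End ℂ (ℕ → ℕ → M) := shiftR with hF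
  have hU : ((E - 1) ^ m) g = 0 := by
    rw [end_sub_one_pow_apply]
    funext p q
    have := hA p q
    simpa [hE, Finset.sum_apply, Pi.smul_apply, shiftL_pow] using this
  have hV : ((F - 1) ^ n) g = 0 := by
    rw [end_sub_one_pow_apply]
    funext p q
    have := hB p q
    simpa [hF, Finset.sum_apply, Pi.smul_apply, shiftR_pow] using this
  have hEF : Commute E F := LinearMap.ext fun f => rfl
  have cuF : Commute (E - 1) F := hEF.sub_left (Commute.one_left F)
  have cuv : Commute (E - 1) (F - 1) := cuF.sub_right (Commute.one_right _)
  have cFv : Commute F (F - 1) := (Commute.refl F).sub_right (Commute.one_right F)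
  have cab : Commute ((E - 1) * F) (F - 1) := cuv.mul_left cFv
  have hdecomp : E * F - 1 = (E - 1) * F + (F - 1) := by
    rw [sub_mul, one_mul, sub_add_sub_cancel]
  have hzero : ((E * F - 1) ^ (m + n - 1)) g = 0 := by
    rw [hdecomp, cab.add_pow, LinearMap.sum_apply]
    apply Finset.sum_eq_zero
    intro k hk
    rw [Module.End.mul_apply, Module.End.natCast_apply, ← Nat.cast_smul_eq_nsmul ℂ, map_smul]
    suffices h : (((E - 1) * F) ^ k * (F - 1) ^ (m + n - 1 - k)) g = 0 by
      rw [h, smul_zero]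
    rw [cuF.mul_pow]
    by_cases hkm : m ≤ k
    · obtain ⟨t, ht⟩ : ∃ t, k = t + m := ⟨k - m, by omega⟩
      have hcm : (E - 1) ^ m * (F ^ k * (F - 1) ^ (m + n - 1 - k))
          = (F ^ k * (F - 1) ^ (m + n - 1 - k)) * (E - 1) ^ m :=
        ((cuF.pow_pow m k).mul_right (cuv.pow_pow m _)).eq
      have hre : (E - 1) ^ k * F ^ k * (F - 1) ^ (m + n - 1 - k)
          = ((E - 1) ^ t * (F ^ k * (F - 1) ^ (m + n - 1 - k))) * (E - 1) ^ m := by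
        rw [show (E - 1) ^ k = (E - 1) ^ t * (E - 1) ^ m by rw [ht, pow_add],
          mul_assoc, mul_assoc, hcm, ← mul_assoc]
      rw [hre, Module.End.mul_apply, hU, map_zero]
    · obtain ⟨t, ht⟩ : ∃ t, m + n - 1 - k = t + n := ⟨m + n - 1 - k - n, by omega⟩
      rw [ht, pow_add, ← mul_assoc, Module.End.mul_apply, hV, map_zero]
  have hexp := end_sub_one_pow_apply (E * F) (m + n - 1) g
  calc ∑ s ∈ range (m + n - 1 + 1),
        ((-1 : ℂ) ^ (m + n - 1 - s) * ((m + n - 1).choose s : ℂ)) • g s s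
      = (((E * F - 1) ^ (m + n - 1)) g) 0 0 := by
        rw [hexp]
        simp [hE, hF, Finset.sum_apply, Pi.smul_apply, shiftLR_pow]
    _ = 0 := by rw [hzero]; rfl

end Diag

theorem left_inverse_product {H : Type*} [NormedAddCommGroup H] [InnerProductSpace ℂ H]
    [CompleteSpace H] (A R₁ R₂ S₁ S₂ : H →L[ℂ] H) (hA : A.IsPositive)
    (m n : ℕ) (hm : 1 ≤ m) (hn : 1 ≤ n)
    (hR : R₁ ∘L R₂ = R₂ ∘L R₁) (hS : S₁ ∘L S₂ = S₂ ∘L S₁)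
    (h1 : ∑ i ∈ Finset.range (m + 1),
        ((-1 : ℂ) ^ (m - i) * (m.choose i : ℂ)) • ((R₁ ^ i) ∘L A ∘L (S₁ ^ i)) = 0)
    (h2 : ∑ j ∈ Finset.range (n + 1),
        ((-1 : ℂ) ^ (n - j) * (n.choose j : ℂ)) • ((R₂ ^ j) ∘L A ∘L (S₂ ^ j)) = 0) :
    ∑ s ∈ Finset.range (m + n - 1 + 1),
      ((-1 : ℂ) ^ (m + n - 1 - s) * ((m + n - 1).choose s : ℂ)) •
        (((R₁ ∘L R₂) ^ s) ∘L A ∘L ((S₁ ∘L S₂) ^ s)) = 0 := by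
  simp only [← ContinuousLinearMap.mul_def] at h1 h2 hR hS ⊢
  have hRc : Commute R₁ R₂ := hR
  have hSc : Commute S₁ S₂ := hS
  set g : ℕ → ℕ → (H →L[ℂ] H) := fun p q => R₁ ^ p * (R₂ ^ q * A * S₂ ^ q) * S₁ ^ p with hg
  have key : ∀ p q i : ℕ,
      R₁ ^ p * R₂ ^ q * (R₁ ^ i * A * S₁ ^ i) * (S₂ ^ q * S₁ ^ p) = g (p + i) q := by
    intro p q i
    have e1 : R₂ ^ q * R₁ ^ i = R₁ ^ i * R₂ ^ q := (hRc.symm.pow_pow q i).eq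
    have e2 : S₁ ^ i * S₂ ^ q = S₂ ^ q * S₁ ^ i := (hSc.pow_pow i q).eq
    have hx : R₁ ^ p * R₂ ^ q * R₁ ^ i = R₁ ^ (p + i) * R₂ ^ q := by
      rw [mul_assoc, e1, ← mul_assoc, ← pow_add]
    have hy : S₁ ^ i * S₂ ^ q * S₁ ^ p = S₂ ^ q * S₁ ^ (p + i) := by
      rw [e2, mul_assoc, ← pow_add, add_comm i p]
    calc R₁ ^ p * R₂ ^ q * (R₁ ^ i * A * S₁ ^ i) * (S₂ ^ q * S₁ ^ p)
        = (R₁ ^ p * R₂ ^ q * R₁ ^ i) * A * (S₁ ^ i * S₂ ^ q * S₁ ^ p) := by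
          noncomm_ring
      _ = (R₁ ^ (p + i) * R₂ ^ q) * A * (S₂ ^ q * S₁ ^ (p + i)) := by rw [hx, hy]
      _ = g (p + i) q := by
          show _ = R₁ ^ (p + i) * (R₂ ^ q * A * S₂ ^ q) * S₁ ^ (p + i)
          noncomm_ring
  have hAh : ∀ p q, ∑ i ∈ Finset.range (m + 1),
      ((-1 : ℂ) ^ (m - i) * (m.choose i : ℂ)) • g (p + i) q = 0 := by
    intro p q
    have h := congrArg (fun T : H →L[ℂ] H => R₁ ^ p * R₂ ^ q * T * (S₂ ^ q * S₁ ^ p)) h1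
    simp only [Finset.mul_sum, Finset.sum_mul, mul_smul_comm, smul_mul_assoc,
      mul_zero, zero_mul] at h
    calc ∑ i ∈ Finset.range (m + 1),
          ((-1 : ℂ) ^ (m - i) * (m.choose i : ℂ)) • g (p + i) q
        = ∑ i ∈ Finset.range (m + 1), ((-1 : ℂ) ^ (m - i) * (m.choose i : ℂ)) •
            (R₁ ^ p * R₂ ^ q * (R₁ ^ i * A * S₁ ^ i) * (S₂ ^ q * S₁ ^ p)) :=
          Finset.sum_congr rfl fun i _ => by rw [key p q i]
      _ = 0 := h
  have hBh : ∀ p q, ∑ j ∈ Finset.range (n + 1),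
      ((-1 : ℂ) ^ (n - j) * (n.choose j : ℂ)) • g p (q + j) = 0 := by
    intro p q
    have h := congrArg (fun T : H →L[ℂ] H => R₁ ^ p * (R₂ ^ q * T * S₂ ^ q) * S₁ ^ p) h2
    simp only [Finset.mul_sum, Finset.sum_mul, mul_smul_comm, smul_mul_assoc,
      mul_zero, zero_mul] at h
    calc ∑ j ∈ Finset.range (n + 1),
          ((-1 : ℂ) ^ (n - j) * (n.choose j : ℂ)) • g p (q + j)
        = ∑ j ∈ Finset.range (n + 1), ((-1 : ℂ) ^ (n - j) * (n.choose j : ℂ)) •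
            (R₁ ^ p * (R₂ ^ q * (R₂ ^ j * A * S₂ ^ j) * S₂ ^ q) * S₁ ^ p) := by
          refine Finset.sum_congr rfl fun j _ => ?_
          congr 1
          show R₁ ^ p * (R₂ ^ (q + j) * A * S₂ ^ (q + j)) * S₁ ^ p = _
          rw [pow_add, show S₂ ^ (q + j) = S₂ ^ j * S₂ ^ q by rw [add_comm, pow_add]]
          noncomm_ring
      _ = 0 := h
  have main := diag_key g m n hm hn hAh hBh
  calc ∑ s ∈ Finset.range (m + n - 1 + 1),
        ((-1 : ℂ) ^ (m + n - 1 - s) * ((m + n - 1).choose s : ℂ)) •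
          ((R₁ * R₂) ^ s * A * (S₁ * S₂) ^ s)
      = ∑ s ∈ Finset.range (m + n - 1 + 1),
        ((-1 : ℂ) ^ (m + n - 1 - s) * ((m + n - 1).choose s : ℂ)) • g s s := by
        refine Finset.sum_congr rfl fun s _ => ?_
        congr 1
        rw [hRc.mul_pow, hSc.mul_pow, (hSc.pow_pow s s).eq]
        show R₁ ^ s * R₂ ^ s * A * (S₂ ^ s * S₁ ^ s) = R₁ ^ s * (R₂ ^ s * A * S₂ ^ s) * S₁ ^ s
        noncomm_ring
    _ = 0 := main
end

section
/- Let T be (A,(m,n))-isosymmetric and assume 0 ∉ σ_ap(A). If λ ∈ σ_ap(T), then |λ| = 1 or λ ∈ ℝ. Consequently ∂σ(T) ⊆ ∂D ∪ ℝ. -/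
open ContinuousLinearMap

/--  is in the approximate point spectrum of . -/
def InApproxSpectrum {H : Type*} [NormedAddCommGroup H] [InnerProductSpace ℂ H]
    [CompleteSpace H] (T : H →L[ℂ] H) (lam : ℂ) : Prop :=
  ∃ u : ℕ → H, (∀ j, ‖u j‖ = 1) ∧
    Filter.Tendsto (fun j => ‖(T - lam • (1 : H →L[ℂ] H)) (u j)‖) Filter.atTop (nhds 0)

section Aux

open Filter

variable {H : Type*} [NormedAddCommGroup H] [InnerProductSpace ℂ H] [CompleteSpace H]

local notation "⟪" x ", " y "⟫" => @inner ℂ _ _ x y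

lemma aux_exists_lb (B : H →L[ℂ] H) (lam : ℂ) (h : ¬ InApproxSpectrum B lam) :
    ∃ c > 0, ∀ x : H, ‖x‖ = 1 → c ≤ ‖(B - lam • (1 : H →L[ℂ] H)) x‖ := by
  by_contra hc
  push_neg at hc
  refine h ?_
  choose u hu1 hu2 using fun n : ℕ => hc (1 / (n + 1)) (by positivity)
  exact ⟨u, hu1, squeeze_zero (fun n => norm_nonneg _) (fun n => (hu2 n).le)
    tendsto_one_div_add_atTop_nhds_zero_nat⟩

lemma aux_selfadj (A : H →L[ℂ] H) (hA : A.IsPositive) :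
    ∀ u v : H, ⟪A u, v⟫ = ⟪u, A v⟫ := by
  have hadjA : ContinuousLinearMap.adjoint A = A := by
    rw [← ContinuousLinearMap.star_eq_adjoint]
    exact hA.isSelfAdjoint
  intro u v
  conv_lhs => rw [← hadjA]
  rw [ContinuousLinearMap.adjoint_inner_left]

lemma aux_cs (A : H →L[ℂ] H) (hA : A.IsPositive) (x y : H) :
    ‖⟪A x, y⟫‖ * ‖⟪A y, x⟫‖ ≤ RCLike.re ⟪A x, x⟫ * RCLike.re ⟪A y, y⟫ := by
  have hsa := aux_selfadj A hA
  letI core : PreInnerProductSpace.Core ℂ H :=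
    { inner := fun u v => ⟪A u, v⟫
      conj_inner_symm := fun u v => by
        show (starRingEnd ℂ) (inner ℂ (A v) u : ℂ) = (inner ℂ (A u) v : ℂ)
        rw [inner_conj_symm]
        exact (hsa u v).symm
      re_inner_nonneg := fun u => (RCLike.nonneg_iff.mp (hA.inner_nonneg_left u)).1
      add_left := fun u v w => by simp [inner_add_left]
      smul_left := fun u v r => by simp [inner_smul_left, mul_comm] }
  exact @InnerProductSpace.Core.inner_mul_inner_self_le ℂ H _ _ _ core x y

lemma aux_pos_lb (A : H →L[ℂ] H) (hA : A.IsPositive) (c : ℝ) (hc : 0 < c)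
    (x : H) (hx : ‖x‖ = 1) (hAx : c ≤ ‖A x‖) :
    c ^ 2 / ‖A‖ ≤ RCLike.re ⟪A x, x⟫ := by
  have hAn : 0 < ‖A‖ := lt_of_lt_of_le hc (hAx.trans (by
    calc ‖A x‖ ≤ ‖A‖ * ‖x‖ := A.le_opNorm x
      _ = ‖A‖ := by rw [hx, mul_one]))
  have hsa := aux_selfadj A hA
  have h1 := aux_cs A hA x (A x)
  have e1 : ‖⟪A x, A x⟫‖ = ‖A x‖ ^ 2 := by
    rw [@inner_self_eq_norm_sq_to_K ℂ]
    simp [Complex.norm_real]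
  have e2 : ‖⟪A (A x), x⟫‖ = ‖A x‖ ^ 2 := by
    rw [hsa (A x) x, e1]
  rw [e1, e2] at h1
  have h2 : RCLike.re ⟪A (A x), A x⟫ ≤ ‖A‖ * ‖A x‖ ^ 2 := by
    calc RCLike.re ⟪A (A x), A x⟫ ≤ ‖⟪A (A x), A x⟫‖ := RCLike.re_le_norm _
      _ ≤ ‖A (A x)‖ * ‖A x‖ := norm_inner_le_norm _ _
      _ ≤ (‖A‖ * ‖A x‖) * ‖A x‖ := by gcongr; exact A.le_opNorm _
      _ = ‖A‖ * ‖A x‖ ^ 2 := by ring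
  have hre : 0 ≤ RCLike.re ⟪A x, x⟫ := (RCLike.nonneg_iff.mp (hA.inner_nonneg_left x)).1
  have hAxpos : 0 < ‖A x‖ := lt_of_lt_of_le hc hAx
  rw [div_le_iff₀ hAn]
  have h4 : ‖A x‖ ^ 2 * ‖A x‖ ^ 2 ≤ (RCLike.re ⟪A x, x⟫ * ‖A‖) * ‖A x‖ ^ 2 := by
    calc ‖A x‖ ^ 2 * ‖A x‖ ^ 2 ≤ RCLike.re ⟪A x, x⟫ * RCLike.re ⟪A (A x), A x⟫ := h1
      _ ≤ RCLike.re ⟪A x, x⟫ * (‖A‖ * ‖A x‖ ^ 2) := mul_le_mul_of_nonneg_left h2 hre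
      _ = (RCLike.re ⟪A x, x⟫ * ‖A‖) * ‖A x‖ ^ 2 := by ring
  have h5 : ‖A x‖ ^ 2 ≤ RCLike.re ⟪A x, x⟫ * ‖A‖ :=
    le_of_mul_le_mul_right h4 (pow_pos hAxpos 2)
  have h6 : c ^ 2 ≤ ‖A x‖ ^ 2 := pow_le_pow_left₀ hc.le hAx 2
  linarith

lemma aux_pow_tendsto (T : H →L[ℂ] H) (lam : ℂ) (u : ℕ → H) (hu : ∀ j, ‖u j‖ = 1)
    (h : Tendsto (fun j => ‖(T - lam • (1 : H →L[ℂ] H)) (u j)‖) atTop (nhds 0)) (p : ℕ) :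
    Tendsto (fun j => ‖(T ^ p - lam ^ p • (1 : H →L[ℂ] H)) (u j)‖) atTop (nhds 0) := by
  induction p with
  | zero => simpa using tendsto_const_nhds
  | succ p ih =>
    have key : ∀ x : H, (T ^ (p + 1) - lam ^ (p + 1) • (1 : H →L[ℂ] H)) x
        = (T ^ p) ((T - lam • (1 : H →L[ℂ] H)) x)
          + lam • ((T ^ p - lam ^ p • (1 : H →L[ℂ] H)) x) := by
      intro x
      simp only [pow_succ, ContinuousLinearMap.mul_apply, ContinuousLinearMap.sub_apply,
        ContinuousLinearMap.smul_apply, ContinuousLinearMap.one_apply, map_sub, map_smul,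
        smul_smul]
      module
    have hb : Tendsto (fun j => ‖T ^ p‖ * ‖(T - lam • (1 : H →L[ℂ] H)) (u j)‖
        + ‖lam‖ * ‖(T ^ p - lam ^ p • (1 : H →L[ℂ] H)) (u j)‖) atTop (nhds 0) := by
      have := (h.const_mul ‖T ^ p‖).add (ih.const_mul ‖lam‖)
      simpa using this
    refine squeeze_zero (fun j => norm_nonneg _) (fun j => ?_) hb
    rw [key (u j)]
    refine (norm_add_le _ _).trans ?_
    exact add_le_add ((T ^ p).le_opNorm _) (le_of_eq (norm_smul _ _))

lemma aux_inner_tendsto (A T : H →L[ℂ] H) (lam : ℂ) (u : ℕ → H) (hu : ∀ j, ‖u j‖ = 1)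
    (h : Tendsto (fun j => ‖(T - lam • (1 : H →L[ℂ] H)) (u j)‖) atTop (nhds 0)) (a b : ℕ) :
    Tendsto (fun j => ⟪A ((T ^ a) (u j)), (T ^ b) (u j)⟫
      - (starRingEnd ℂ lam) ^ a * lam ^ b * ⟪A (u j), u j⟫) atTop (nhds 0) := by
  have e : ∀ j, ⟪A ((T ^ a) (u j)), (T ^ b) (u j)⟫
      - (starRingEnd ℂ lam) ^ a * lam ^ b * ⟪A (u j), u j⟫
      = ⟪A ((T ^ a - lam ^ a • (1 : H →L[ℂ] H)) (u j)), (T ^ b) (u j)⟫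
        + (starRingEnd ℂ lam) ^ a *
          ⟪A (u j), (T ^ b - lam ^ b • (1 : H →L[ℂ] H)) (u j)⟫ := by
    intro j
    simp only [ContinuousLinearMap.sub_apply, ContinuousLinearMap.smul_apply,
      ContinuousLinearMap.one_apply, map_sub, map_smul, inner_sub_left, inner_sub_right,
      inner_smul_left, inner_smul_right, map_pow]
    ring
  have t1 : Tendsto (fun j =>
      ⟪A ((T ^ a - lam ^ a • (1 : H →L[ℂ] H)) (u j)), (T ^ b) (u j)⟫) atTop (nhds 0) := by
    have hbnd : ∀ j, ‖⟪A ((T ^ a - lam ^ a • (1 : H →L[ℂ] H)) (u j)), (T ^ b) (u j)⟫‖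
        ≤ (‖A‖ * ‖T ^ b‖) * ‖(T ^ a - lam ^ a • (1 : H →L[ℂ] H)) (u j)‖ := by
      intro j
      calc ‖⟪A ((T ^ a - lam ^ a • (1 : H →L[ℂ] H)) (u j)), (T ^ b) (u j)⟫‖
          ≤ ‖A ((T ^ a - lam ^ a • (1 : H →L[ℂ] H)) (u j))‖ * ‖(T ^ b) (u j)‖ :=
            norm_inner_le_norm _ _
        _ ≤ (‖A‖ * ‖(T ^ a - lam ^ a • (1 : H →L[ℂ] H)) (u j)‖) * (‖T ^ b‖ * ‖u j‖) := by
            gcongr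
            · exact A.le_opNorm _
            · exact (T ^ b).le_opNorm _
        _ = (‖A‖ * ‖T ^ b‖) * ‖(T ^ a - lam ^ a • (1 : H →L[ℂ] H)) (u j)‖ := by
            rw [hu j]; ring
    exact squeeze_zero_norm hbnd
      (by simpa using (aux_pow_tendsto T lam u hu h a).const_mul (‖A‖ * ‖T ^ b‖))
  have t2 : Tendsto (fun j => (starRingEnd ℂ lam) ^ a *
      ⟪A (u j), (T ^ b - lam ^ b • (1 : H →L[ℂ] H)) (u j)⟫) atTop (nhds 0) := by
    have hbnd : ∀ j, ‖(starRingEnd ℂ lam) ^ a *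
        ⟪A (u j), (T ^ b - lam ^ b • (1 : H →L[ℂ] H)) (u j)⟫‖
        ≤ (‖lam‖ ^ a * ‖A‖) * ‖(T ^ b - lam ^ b • (1 : H →L[ℂ] H)) (u j)‖ := by
      intro j
      rw [norm_mul]
      calc ‖(starRingEnd ℂ lam) ^ a‖ * ‖⟪A (u j), (T ^ b - lam ^ b • (1 : H →L[ℂ] H)) (u j)⟫‖
          ≤ ‖lam‖ ^ a * (‖A (u j)‖ * ‖(T ^ b - lam ^ b • (1 : H →L[ℂ] H)) (u j)‖) := by
            rw [norm_pow, RCLike.norm_conj]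
            exact mul_le_mul_of_nonneg_left (norm_inner_le_norm _ _) (by positivity)
        _ ≤ ‖lam‖ ^ a * ((‖A‖ * ‖u j‖) * ‖(T ^ b - lam ^ b • (1 : H →L[ℂ] H)) (u j)‖) := by
            gcongr
            exact A.le_opNorm _
        _ = (‖lam‖ ^ a * ‖A‖) * ‖(T ^ b - lam ^ b • (1 : H →L[ℂ] H)) (u j)‖ := by
            rw [hu j]; ring
    exact squeeze_zero_norm hbnd
      (by simpa using (aux_pow_tendsto T lam u hu h b).const_mul (‖lam‖ ^ a * ‖A‖))
  have := (t1.add t2).congr (fun j => (e j).symm)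
  simpa using this

end Aux

set_option maxRecDepth 8000 in
theorem approx_spectrum_of_isosymmetric {H : Type*} [NormedAddCommGroup H]
    [InnerProductSpace ℂ H] [CompleteSpace H] (A T : H →L[ℂ] H) (hA : A.IsPositive)
    (m n : ℕ) (h : Omega A T m n = 0)
    (hAap : ¬ InApproxSpectrum A 0) :
    (∀ lam : ℂ, InApproxSpectrum T lam → ‖lam‖ = 1 ∨ lam.im = 0) ∧
      ∀ lam ∈ frontier (spectrum ℂ T), ‖lam‖ = 1 ∨ lam.im = 0 := by
  open Filter in
  have part1 : ∀ lam : ℂ, InApproxSpectrum T lam → ‖lam‖ = 1 ∨ lam.im = 0 := by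
    intro lam hlam
    obtain ⟨u, hu, hT⟩ := hlam
    obtain ⟨cA, hcA, hlbA⟩ := aux_exists_lb A 0 hAap
    simp only [zero_smul, sub_zero] at hlbA
    have hAn : 0 < ‖A‖ := lt_of_lt_of_le hcA ((hlbA (u 0) (hu 0)).trans (by
      calc ‖A (u 0)‖ ≤ ‖A‖ * ‖u 0‖ := A.le_opNorm _
        _ = ‖A‖ := by rw [hu 0, mul_one]))
    set c' : ℝ := cA ^ 2 / ‖A‖ with hc'def
    have hc' : 0 < c' := by positivity
    have hlow : ∀ j, c' ≤ ‖(inner ℂ (A (u j)) (u j) : ℂ)‖ := by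
      intro j
      refine le_trans (aux_pos_lb A hA cA hcA (u j) (hu j) (hlbA (u j) (hu j))) ?_
      exact RCLike.re_le_norm _
    set S : ℂ := ∑ j ∈ Finset.range (m + 1), ∑ k ∈ Finset.range (n + 1),
      ((-1 : ℂ) ^ (m + n - (j + k)) * (m.choose j : ℂ) * (n.choose k : ℂ)) *
        ((starRingEnd ℂ lam) ^ (n + j - k) * lam ^ (k + j)) with hSdef
    have hadj : ∀ (p : ℕ) (v w : H),
        (inner ℂ (((adjoint T) ^ p) v) w : ℂ) = inner ℂ v ((T ^ p) w) := by
      intro p v w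
      rw [← ContinuousLinearMap.star_eq_adjoint, ← star_pow,
        ContinuousLinearMap.star_eq_adjoint, ContinuousLinearMap.adjoint_inner_left]
    have hOm : ∀ i, (∑ j ∈ Finset.range (m + 1), ∑ k ∈ Finset.range (n + 1),
        ((-1 : ℂ) ^ (m + n - (j + k)) * (m.choose j : ℂ) * (n.choose k : ℂ)) *
          (inner ℂ (A ((T ^ (n + j - k)) (u i))) ((T ^ (k + j)) (u i)) : ℂ)) = 0 := by
      intro i
      have h0 : (inner ℂ ((Omega A T m n) (u i)) (u i) : ℂ) = 0 := by
        rw [h]; simp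
      rw [Omega] at h0
      simp only [ContinuousLinearMap.sum_apply, sum_inner, ContinuousLinearMap.smul_apply,
        ContinuousLinearMap.comp_apply, inner_smul_left, map_mul, map_pow, map_neg, map_one,
        map_natCast, hadj] at h0
      exact h0
    have ht : Tendsto (fun i => ∑ j ∈ Finset.range (m + 1), ∑ k ∈ Finset.range (n + 1),
        ((-1 : ℂ) ^ (m + n - (j + k)) * (m.choose j : ℂ) * (n.choose k : ℂ)) *
          ((inner ℂ (A ((T ^ (n + j - k)) (u i))) ((T ^ (k + j)) (u i)) : ℂ)
            - (starRingEnd ℂ lam) ^ (n + j - k) * lam ^ (k + j) *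
              (inner ℂ (A (u i)) (u i) : ℂ))) atTop (nhds 0) := by
      have h00 : (0 : ℂ) = ∑ j ∈ Finset.range (m + 1), ∑ k ∈ Finset.range (n + 1), (0 : ℂ) := by
        simp
      rw [h00]
      refine tendsto_finset_sum _ fun j _ => tendsto_finset_sum _ fun k _ => ?_
      simpa using (aux_inner_tendsto A T lam u hu hT (n + j - k) (k + j)).const_mul
        ((-1 : ℂ) ^ (m + n - (j + k)) * (m.choose j : ℂ) * (n.choose k : ℂ))
    have heq : ∀ i, S * (inner ℂ (A (u i)) (u i) : ℂ)
        = -(∑ j ∈ Finset.range (m + 1), ∑ k ∈ Finset.range (n + 1),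
          ((-1 : ℂ) ^ (m + n - (j + k)) * (m.choose j : ℂ) * (n.choose k : ℂ)) *
            ((inner ℂ (A ((T ^ (n + j - k)) (u i))) ((T ^ (k + j)) (u i)) : ℂ)
              - (starRingEnd ℂ lam) ^ (n + j - k) * lam ^ (k + j) *
                (inner ℂ (A (u i)) (u i) : ℂ)))  := by
      intro i
      have expand : S * (inner ℂ (A (u i)) (u i) : ℂ)
          + (∑ j ∈ Finset.range (m + 1), ∑ k ∈ Finset.range (n + 1),
            ((-1 : ℂ) ^ (m + n - (j + k)) * (m.choose j : ℂ) * (n.choose k : ℂ)) *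
              ((inner ℂ (A ((T ^ (n + j - k)) (u i))) ((T ^ (k + j)) (u i)) : ℂ)
                - (starRingEnd ℂ lam) ^ (n + j - k) * lam ^ (k + j) *
                  (inner ℂ (A (u i)) (u i) : ℂ)))
          = ∑ j ∈ Finset.range (m + 1), ∑ k ∈ Finset.range (n + 1),
            ((-1 : ℂ) ^ (m + n - (j + k)) * (m.choose j : ℂ) * (n.choose k : ℂ)) *
              (inner ℂ (A ((T ^ (n + j - k)) (u i))) ((T ^ (k + j)) (u i)) : ℂ) := by
        rw [hSdef, Finset.sum_mul]
        simp only [Finset.sum_mul, mul_sub, Finset.sum_sub_distrib, mul_assoc]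
        abel
      rw [eq_neg_iff_add_eq_zero, expand, hOm i]
    have hS0 : Tendsto (fun i => S * (inner ℂ (A (u i)) (u i) : ℂ)) atTop (nhds 0) := by
      have := ht.neg.congr (fun i => (heq i).symm)
      simpa using this
    have hSz : S = 0 := by
      by_contra hS
      have hnorm : Tendsto (fun i => ‖S * (inner ℂ (A (u i)) (u i) : ℂ)‖) atTop (nhds 0) := by
        simpa using hS0.norm
      have hlb2 : ∀ i, ‖S‖ * c' ≤ ‖S * (inner ℂ (A (u i)) (u i) : ℂ)‖ := by
        intro i
        rw [norm_mul]
        exact mul_le_mul_of_nonneg_left (hlow i) (norm_nonneg S)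
      have hfin := ge_of_tendsto hnorm (Filter.Eventually.of_forall hlb2)
      have hSpos : 0 < ‖S‖ := norm_pos_iff.mpr hS
      nlinarith
    have hfac : S = (lam * starRingEnd ℂ lam - 1) ^ m * (lam - starRingEnd ℂ lam) ^ n := by
      rw [hSdef, sub_eq_add_neg, sub_eq_add_neg, add_pow, add_pow, Finset.sum_mul_sum]
      refine Finset.sum_congr rfl fun j hj => Finset.sum_congr rfl fun k hk => ?_
      rw [Finset.mem_range, Nat.lt_succ_iff] at hj hk
      have e1 : m + n - (j + k) = (m - j) + (n - k) := by omega
      have e2 : n + j - k = (n - k) + j := by omega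
      rw [e1, e2, show (-(starRingEnd ℂ lam)) ^ (n - k)
          = (-1 : ℂ) ^ (n - k) * (starRingEnd ℂ lam) ^ (n - k) from neg_pow _ _]
      simp only [pow_add, mul_pow]
      ring
    rw [hfac] at hSz
    rcases mul_eq_zero.mp hSz with h1 | h2
    · left
      have hbase : lam * starRingEnd ℂ lam - 1 = 0 := by
        rcases pow_eq_zero_iff'.mp h1 with ⟨hb, _⟩
        exact hb
      have hnsq : (Complex.normSq lam : ℂ) = 1 := by
        rw [← Complex.mul_conj]
        linear_combination hbase
      have hnsq' : Complex.normSq lam = 1 := by exact_mod_cast hnsq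
      rw [Complex.norm_def, hnsq', Real.sqrt_one]
    · right
      have hbase : lam - starRingEnd ℂ lam = 0 := by
        rcases pow_eq_zero_iff'.mp h2 with ⟨hb, _⟩
        exact hb
      have : starRingEnd ℂ lam = lam := by linear_combination -hbase
      exact Complex.conj_eq_iff_im.mp this
  refine ⟨part1, ?_⟩
  intro lam hfr
  refine part1 lam ?_
  by_contra hnot
  obtain ⟨c, hc, hlb⟩ := aux_exists_lb T lam hnot
  have hlb' : ∀ x : H, c * ‖x‖ ≤ ‖(T - lam • (1 : H →L[ℂ] H)) x‖ := by
    intro x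
    rcases eq_or_ne x 0 with rfl | hx
    · simp
    · have hxn : (0 : ℝ) < ‖x‖ := norm_pos_iff.mpr hx
      have h1 := hlb (((‖x‖ : ℂ))⁻¹ • x) (by
        rw [norm_smul, norm_inv, Complex.norm_real, Real.norm_eq_abs, abs_of_pos hxn,
          inv_mul_cancel₀ hxn.ne'])
      rw [map_smul, norm_smul, norm_inv, Complex.norm_real, Real.norm_eq_abs,
        abs_of_pos hxn] at h1
      calc c * ‖x‖ ≤ (‖x‖⁻¹ * ‖(T - lam • (1 : H →L[ℂ] H)) x‖) * ‖x‖ := by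
            exact mul_le_mul_of_nonneg_right h1 hxn.le
        _ = ‖(T - lam • (1 : H →L[ℂ] H)) x‖ := by field_simp
  have hcl : lam ∈ closure (spectrum ℂ T)ᶜ := by
    have := hfr
    rw [frontier_eq_closure_inter_closure] at this
    exact this.2
  have hcl2 : lam ∈ closure (spectrum ℂ T) := by
    have := hfr
    rw [frontier_eq_closure_inter_closure] at this
    exact this.1
  obtain ⟨μ, hμmem, hμd⟩ := Metric.mem_closure_iff.mp hcl (c / 2) (by positivity)
  have hμu : IsUnit (μ • (1 : H →L[ℂ] H) - T) := by
    have := spectrum.notMem_iff.mp hμmem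
    simpa [Algebra.algebraMap_eq_smul_one] using this
  have hMlb : ∀ x : H, (c / 2) * ‖x‖ ≤ ‖(μ • (1 : H →L[ℂ] H) - T) x‖ := by
    intro x
    have h1 : (μ • (1 : H →L[ℂ] H) - T) x
        = (μ - lam) • x - (T - lam • (1 : H →L[ℂ] H)) x := by
      simp only [ContinuousLinearMap.sub_apply, ContinuousLinearMap.smul_apply,
        ContinuousLinearMap.one_apply, sub_smul]
      abel
    rw [h1]
    have h3 : ‖μ - lam‖ < c / 2 := by
      rw [← dist_eq_norm, dist_comm]
      exact hμd
    calc (c / 2) * ‖x‖ = c * ‖x‖ - (c / 2) * ‖x‖ := by ring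
      _ ≤ ‖(T - lam • (1 : H →L[ℂ] H)) x‖ - ‖(μ - lam) • x‖ := by
          refine sub_le_sub (hlb' x) ?_
          rw [norm_smul]
          exact mul_le_mul_of_nonneg_right h3.le (norm_nonneg x)
      _ ≤ ‖(μ - lam) • x - (T - lam • (1 : H →L[ℂ] H)) x‖ := by
          rw [norm_sub_rev]
          exact norm_sub_norm_le _ _
  set R : H →L[ℂ] H := ↑hμu.unit⁻¹ with hRdef
  have hMRop : (μ • (1 : H →L[ℂ] H) - T) * R = 1 := by
    rw [hRdef]
    exact hμu.mul_val_inv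
  have hMR : ∀ y : H, (μ • (1 : H →L[ℂ] H) - T) (R y) = y := by
    intro y
    have : ((μ • (1 : H →L[ℂ] H) - T) * R) y = (1 : H →L[ℂ] H) y := by rw [hMRop]
    simpa using this
  have hRnorm : ‖R‖ ≤ 2 / c := by
    refine ContinuousLinearMap.opNorm_le_bound _ (by positivity) fun y => ?_
    have hy := hMlb (R y)
    rw [hMR y] at hy
    rw [div_mul_eq_mul_div, le_div_iff₀ hc]
    nlinarith
  have hsmall : ‖(μ - lam) • R‖ < 1 := by
    rw [norm_smul]
    have h3 : ‖μ - lam‖ < c / 2 := by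
      rw [← dist_eq_norm, dist_comm]
      exact hμd
    calc ‖μ - lam‖ * ‖R‖ ≤ ‖μ - lam‖ * (2 / c) := by
          exact mul_le_mul_of_nonneg_left hRnorm (norm_nonneg _)
      _ < (c / 2) * (2 / c) := by
          exact mul_lt_mul_of_pos_right h3 (by positivity)
      _ = 1 := by field_simp
  have hUnit2 : IsUnit ((1 : H →L[ℂ] H) - (μ - lam) • R) :=
    (Units.oneSub _ hsmall).isUnit
  have hfactor : lam • (1 : H →L[ℂ] H) - T
      = (μ • (1 : H →L[ℂ] H) - T) * ((1 : H →L[ℂ] H) - (μ - lam) • R) := by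
    rw [mul_sub, mul_one, mul_smul_comm, hMRop, sub_smul]
    abel
  have hUnitLam : IsUnit (lam • (1 : H →L[ℂ] H) - T) := by
    rw [hfactor]
    exact hμu.mul hUnit2
  have hres : lam ∈ resolventSet ℂ T := by
    rw [spectrum.mem_resolventSet_iff]
    simpa [Algebra.algebraMap_eq_smul_one] using hUnitLam
  obtain ⟨z, hz1, hz2⟩ := mem_closure_iff.mp hcl2 _ (spectrum.isOpen_resolventSet T) hres
  exact hz2 hz1
end

section
/- Every (A,(m,n))-isosymmetric operator T has the single valued extension property, provided A is injective (0 ∉ σ_p(A)). More precisely, if f : D → H is analytic on an open set D and (T − λ)f(λ) = 0 for all λ ∈ D, then f ≡ 0 on D. -/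
open ContinuousLinearMap
open scoped InnerProductSpace ComplexConjugate

/-- A positive operator vanishing in the quadratic form vanishes at that vector. -/
lemma pos_apply_eq_zero {H : Type*} [NormedAddCommGroup H] [InnerProductSpace ℂ H]
    [CompleteSpace H] {A : H →L[ℂ] H} (hA : A.IsPositive) {x : H}
    (hx : ⟪A x, x⟫_ℂ = 0) : A x = 0 := by
  set a : ℝ := ‖A x‖ ^ 2 with ha
  set b : ℝ := RCLike.re ⟪A (A x), A x⟫_ℂ with hb
  have hb0 : 0 ≤ b := hA.re_inner_nonneg_left (A x)
  have hsa : ⟪A (A x), x⟫_ℂ = ⟪A x, A x⟫_ℂ := by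
    have hs := isSelfAdjoint_iff_isSymmetric.mp hA.isSelfAdjoint
    exact hs (A x) x
  have h1 : ∀ t : ℝ, 0 ≤ 2 * t * a + t ^ 2 * b := by
    intro t
    have h0 := hA.re_inner_nonneg_left (x + (t : ℂ) • A x)
    have hexp : ⟪A (x + (t:ℂ) • A x), x + (t:ℂ) • A x⟫_ℂ
        = ⟪A x, x⟫_ℂ + (t:ℂ) * ⟪A x, A x⟫_ℂ + (t:ℂ) * ⟪A (A x), x⟫_ℂ
          + (t:ℂ)^2 * ⟪A (A x), A x⟫_ℂ := by
      rw [map_add, A.map_smul, inner_add_left, inner_add_right, inner_add_right,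
        inner_smul_left, inner_smul_right, inner_smul_left, inner_smul_right]
      simp [Complex.conj_ofReal]
      ring
    rw [hexp, hx, hsa] at h0
    have hre : RCLike.re (⟪A x, A x⟫_ℂ : ℂ) = a := by
      rw [ha, ← inner_self_eq_norm_sq (𝕜 := ℂ) (A x)]
    simp only [map_add, map_mul, zero_add, RCLike.re_to_complex, Complex.add_re,
      Complex.mul_re, Complex.ofReal_re, Complex.ofReal_im, zero_mul, sub_zero,
      Complex.ofReal_pow] at h0 hre
    rw [hre] at h0
    simp only [← Complex.ofReal_pow, Complex.ofReal_re, Complex.ofReal_im,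
      zero_mul, sub_zero] at h0
    have hb' : (⟪A (A x), A x⟫_ℂ : ℂ).re = b := by
      rw [hb, RCLike.re_to_complex]
    rw [hb'] at h0
    nlinarith [h0]
  have ha0 : 0 ≤ a := sq_nonneg _
  have key : a ≤ 0 := by
    by_contra hpos
    push_neg at hpos
    have h2 := h1 (-(a / (b + 1)))
    have hb1 : (0:ℝ) < b + 1 := by linarith
    have hne : b + 1 ≠ 0 := ne_of_gt hb1
    field_simp at h2
    have hd : (0:ℝ) < (b + 1) * (b + 1) ^ 2 := by positivity
    nlinarith [mul_pos (mul_pos hpos hpos) hb1, mul_pos hpos hpos, h2]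
  have hz : a = 0 := le_antisymm key ha0
  have : ‖A x‖ = 0 := by nlinarith [norm_nonneg (A x)]
  simpa using this

lemma sum_identity (l c : ℂ) (m n : ℕ) :
    ∑ j ∈ Finset.range (m + 1), ∑ k ∈ Finset.range (n + 1),
      ((-1 : ℂ) ^ (m + n - (j + k)) * (m.choose j : ℂ) * (n.choose k : ℂ))
        * (c ^ (k + j) * l ^ (n + j - k))
      = (c * l - 1) ^ m * (c - l) ^ n := by
  have e1 : (c * l - 1) ^ m = ∑ j ∈ Finset.range (m + 1),
      (c * l) ^ j * (-1 : ℂ) ^ (m - j) * (m.choose j : ℂ) := by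
    rw [sub_eq_add_neg, add_pow]
  have e2 : (c - l) ^ n = ∑ k ∈ Finset.range (n + 1),
      c ^ k * (-l) ^ (n - k) * (n.choose k : ℂ) := by
    rw [sub_eq_add_neg, add_pow]
  rw [e1, e2, Finset.sum_mul_sum]
  refine Finset.sum_congr rfl fun j hj => Finset.sum_congr rfl fun k hk => ?_
  have hjm : j ≤ m := Nat.lt_succ_iff.mp (Finset.mem_range.mp hj)
  have hkn : k ≤ n := Nat.lt_succ_iff.mp (Finset.mem_range.mp hk)
  have d1 : m + n - (j + k) = (m - j) + (n - k) := by omega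
  have d2 : n + j - k = j + (n - k) := by omega
  rw [d1, d2, pow_add, pow_add, pow_add, mul_pow, neg_pow l]
  ring

lemma inner_Omega {H : Type*} [NormedAddCommGroup H] [InnerProductSpace ℂ H]
    [CompleteSpace H] (A T : H →L[ℂ] H) (m n : ℕ) (x : H) (lam : ℂ)
    (hTx : T x = lam • x) :
    ⟪x, (Omega A T m n) x⟫_ℂ
      = ((starRingEnd ℂ) lam * lam - 1) ^ m * ((starRingEnd ℂ) lam - lam) ^ n
          * ⟪x, A x⟫_ℂ := by
  have hpow : ∀ p : ℕ, (T ^ p) x = lam ^ p • x := by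
    intro p
    induction p with
    | zero => simp
    | succ p ih =>
        rw [pow_succ, ContinuousLinearMap.mul_apply, hTx, map_smul, ih, smul_smul, pow_succ]
        ring_nf
  have hadjpow : ∀ p : ℕ, (adjoint T) ^ p = adjoint (T ^ p) := by
    intro p
    rw [← star_eq_adjoint, ← star_eq_adjoint, ← star_pow]
  have hterm : ∀ j ∈ Finset.range (m + 1), ∀ k ∈ Finset.range (n + 1),
      ⟪x, (((-1 : ℂ) ^ (m + n - (j + k)) * (m.choose j : ℂ) * (n.choose k : ℂ)) •
        (((adjoint T) ^ (k + j)) ∘L A ∘L (T ^ (n + j - k)))) x⟫_ℂ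
      = ((-1 : ℂ) ^ (m + n - (j + k)) * (m.choose j : ℂ) * (n.choose k : ℂ))
          * (((starRingEnd ℂ) lam) ^ (k + j) * lam ^ (n + j - k)) * ⟪x, A x⟫_ℂ := by
    intro j _ k _
    rw [ContinuousLinearMap.smul_apply, inner_smul_right, ContinuousLinearMap.comp_apply,
      ContinuousLinearMap.comp_apply, hpow, map_smul, hadjpow, adjoint_inner_right,
      hpow, inner_smul_left, inner_smul_right, map_pow]
    ring
  have step : ⟪x, (Omega A T m n) x⟫_ℂ
      = ∑ j ∈ Finset.range (m + 1), ∑ k ∈ Finset.range (n + 1),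
        ((-1 : ℂ) ^ (m + n - (j + k)) * (m.choose j : ℂ) * (n.choose k : ℂ))
          * (((starRingEnd ℂ) lam) ^ (k + j) * lam ^ (n + j - k)) * ⟪x, A x⟫_ℂ := by
    rw [Omega, ContinuousLinearMap.sum_apply, inner_sum]
    refine Finset.sum_congr rfl fun j hj => ?_
    rw [ContinuousLinearMap.sum_apply, inner_sum]
    exact Finset.sum_congr rfl fun k hk => hterm j hj k hk
  rw [step]
  simp only [← Finset.sum_mul]
  rw [sum_identity lam ((starRingEnd ℂ) lam) m n]

lemma exists_good_point (w : ℂ) (r : ℝ) (hr : 0 < r) :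
    ∃ z : ℂ, dist z w < r ∧ z.im ≠ 0 ∧ ‖z‖ ≠ 1 := by
  set s : ℝ := w.im with hs
  set cc : ℝ := 1 - w.re ^ 2 with hcc
  set B : Set ℝ := {-s, -s + Real.sqrt cc, -s - Real.sqrt cc} with hB
  have hBfin : B.Finite := Set.toFinite _
  obtain ⟨t, ht⟩ := ((Set.Ioo_infinite hr).diff hBfin).nonempty
  obtain ⟨⟨ht0, htr⟩, htB⟩ := ht
  refine ⟨w + (t : ℂ) * Complex.I, ?_, ?_, ?_⟩
  · have : dist (w + (t : ℂ) * Complex.I) w = |t| := by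
      rw [Complex.dist_eq]
      simp [abs_of_pos ht0]
    rw [this, abs_of_pos ht0]; exact htr
  · simp only [Complex.add_im, Complex.mul_im, Complex.ofReal_re, Complex.I_im,
      Complex.ofReal_im, Complex.I_re, mul_zero, mul_one, zero_mul, add_zero]
    intro hcon
    exact htB (by left; linarith)
  · intro habs
    have hsq : Complex.normSq (w + (t : ℂ) * Complex.I) = 1 := by
      rw [← Complex.sq_norm, habs]; norm_num
    have hre : (w + (t : ℂ) * Complex.I).re = w.re := by simp
    have him : (w + (t : ℂ) * Complex.I).im = s + t := by simp [hs]
    rw [Complex.normSq_apply, hre, him] at hsq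
    have h2 : (s + t) ^ 2 = cc := by rw [hcc]; nlinarith
    have h3 : |s + t| = Real.sqrt cc := by
      rw [← Real.sqrt_sq_eq_abs, h2]
    rcases (abs_eq (Real.sqrt_nonneg cc)).mp h3 with h4 | h4
    · exact htB (by right; left; linarith)
    · refine htB (by right; right; show t = -s - Real.sqrt cc; linarith)

theorem isosymmetric_SVEP {H : Type*} [NormedAddCommGroup H] [InnerProductSpace ℂ H]
    [CompleteSpace H] (A T : H →L[ℂ] H) (hA : A.IsPositive)
    (hAinj : Function.Injective A) (m n : ℕ) (h : Omega A T m n = 0)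
    (D : Set ℂ) (hD : IsOpen D) (f : ℂ → H) (hf : ∀ lam ∈ D, AnalyticAt ℂ f lam)
    (hfeq : ∀ lam ∈ D, (T - lam • (1 : H →L[ℂ] H)) (f lam) = 0) :
    ∀ lam ∈ D, f lam = 0 := by
  have hgood : ∀ z ∈ D, z.im ≠ 0 → ‖z‖ ≠ 1 → f z = 0 := by
    intro z hz him habs
    have hTz : T (f z) = z • f z := by
      have h1 := hfeq z hz
      rw [ContinuousLinearMap.sub_apply, ContinuousLinearMap.smul_apply,
        ContinuousLinearMap.one_apply, sub_eq_zero] at h1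
      exact h1
    have h0 : ⟪f z, (Omega A T m n) (f z)⟫_ℂ = 0 := by rw [h]; simp
    rw [inner_Omega A T m n (f z) z hTz] at h0
    have f1 : (starRingEnd ℂ) z * z - 1 ≠ 0 := by
      intro hh
      apply habs
      have h2 : (starRingEnd ℂ) z * z = 1 := by linear_combination hh
      have h3 : ((Complex.normSq z : ℝ) : ℂ) = 1 := by
        rw [Complex.normSq_eq_conj_mul_self]; exact h2
      have h4 : Complex.normSq z = 1 := by exact_mod_cast h3
      rw [← Complex.sq_norm] at h4
      nlinarith [norm_nonneg z]
    have f2 : (starRingEnd ℂ) z - z ≠ 0 := by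
      intro hh
      apply him
      have h2 : (starRingEnd ℂ) z = z := by linear_combination hh
      exact (Complex.conj_eq_iff_im.mp h2)
    have hinz : ⟪f z, A (f z)⟫_ℂ = 0 := by
      have hne : ((starRingEnd ℂ) z * z - 1) ^ m * ((starRingEnd ℂ) z - z) ^ n ≠ 0 :=
        mul_ne_zero (pow_ne_zero _ f1) (pow_ne_zero _ f2)
      exact (mul_eq_zero.mp h0).resolve_left hne
    have hAz : A (f z) = 0 := by
      apply pos_apply_eq_zero hA
      rw [← inner_conj_symm, hinz, map_zero]
    exact hAinj (by rw [hAz, map_zero])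
  intro lam0 hlam0
  have hc : ContinuousAt f lam0 := (hf lam0 hlam0).continuousAt
  obtain ⟨r, hr, hball⟩ := Metric.isOpen_iff.mp hD lam0 hlam0
  have hnorm : ‖f lam0‖ ≤ 0 := by
    refine le_of_forall_pos_le_add fun ε hε => ?_
    obtain ⟨δ, hδ, hδc⟩ := Metric.continuousAt_iff.mp hc ε hε
    obtain ⟨z, hzd, hzim, hzabs⟩ := exists_good_point lam0 (min δ r) (lt_min hδ hr)
    have hzD : z ∈ D := hball (by
      rw [Metric.mem_ball]; exact lt_of_lt_of_le hzd (min_le_right _ _))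
    have hz0 : f z = 0 := hgood z hzD hzim hzabs
    have := hδc (lt_of_lt_of_le hzd (min_le_left _ _))
    rw [hz0, dist_zero_left] at this
    linarith
  have : ‖f lam0‖ = 0 := le_antisymm hnorm (norm_nonneg _)
  simpa using this
end

section
/- Let T, Q ∈ B(H) be doubly commuting (TQ = QT and TQ* = Q*T), with Q nilpotent of order r (Q^r = 0). If T is (A,(m,n))-isosymmetric, then T + Q is (A,(m+2r−2, n+2r−1))-isosymmetric. -/
open ContinuousLinearMap

section Aux

/-- Binomial expansion with `ℂ`-scalar coefficients. -/
lemma exp_add_aux {R : Type*} [Ring R] [Algebra ℂ R] {x y : R} (h : Commute x y) (n : ℕ) :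
    (x + y) ^ n = ∑ j ∈ Finset.range (n + 1),
      ((n.choose j : ℂ)) • (x ^ j * y ^ (n - j)) := by
  rw [h.add_pow]
  refine Finset.sum_congr rfl fun j _ => ?_
  rw [Algebra.smul_def, map_natCast, (Nat.cast_commute (n.choose j) _).eq]

lemma exp_sub_aux {R : Type*} [Ring R] [Algebra ℂ R] {x y : R} (h : Commute x y) (n : ℕ) :
    (x - y) ^ n = ∑ j ∈ Finset.range (n + 1),
      ((-1 : ℂ) ^ (n - j) * (n.choose j : ℂ)) • (x ^ j * y ^ (n - j)) := by
  rw [sub_eq_add_neg, h.neg_right.add_pow]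
  refine Finset.sum_congr rfl fun j _ => ?_
  have hneg : (-y) ^ (n - j) = ((-1 : ℂ) ^ (n - j)) • y ^ (n - j) := by
    rw [← neg_one_smul ℂ y, smul_pow]
  have hC : ∀ z : R, z * (n.choose j : R) = ((n.choose j : ℂ)) • z := fun z => by
    rw [Algebra.smul_def, map_natCast, (Nat.cast_commute (n.choose j) _).eq]
  rw [hneg, mul_smul_comm, smul_mul_assoc, hC, smul_smul]

/-- Shuffle a product of commuting powers. -/
lemma comm_shuffle {R : Type*} [Monoid R] {x y z w : R}
    (hxy : Commute x y) (hxz : Commute x z) (hxw : Commute x w)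
    (hyz : Commute y z) (hyw : Commute y w) (hzw : Commute z w)
    (t1 m s1 n Mt Ns : ℕ) :
    x ^ (t1 + m) * z ^ Mt * (y ^ (s1 + n) * w ^ Ns) =
      x ^ t1 * z ^ Mt * (y ^ s1 * w ^ Ns) * (x ^ m * y ^ n) := by
  set s : Set R := {x, y, z, w} with hs
  have hcomm : ∀ a ∈ s, ∀ b ∈ s, a * b = b * a := by
    intro a ha b hb
    simp only [hs, Set.mem_insert_iff, Set.mem_singleton_iff] at ha hb
    rcases ha with rfl | rfl | rfl | rfl <;> rcases hb with rfl | rfl | rfl | rfl <;>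
      first
        | rfl
        | exact hxy.eq | exact hxy.symm.eq | exact hxz.eq | exact hxz.symm.eq
        | exact hxw.eq | exact hxw.symm.eq | exact hyz.eq | exact hyz.symm.eq
        | exact hyw.eq | exact hyw.symm.eq | exact hzw.eq | exact hzw.symm.eq
  letI : CommMonoid (Submonoid.closure s) := Submonoid.closureCommMonoidOfComm (M := R) hcomm
  have hx : x ∈ Submonoid.closure s := Submonoid.subset_closure (by simp [hs])
  have hy : y ∈ Submonoid.closure s := Submonoid.subset_closure (by simp [hs])
  have hz : z ∈ Submonoid.closure s := Submonoid.subset_closure (by simp [hs])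
  have hw : w ∈ Submonoid.closure s := Submonoid.subset_closure (by simp [hs])
  have key : (⟨x, hx⟩ : Submonoid.closure s) ^ (t1 + m) * ⟨z, hz⟩ ^ Mt *
      (⟨y, hy⟩ ^ (s1 + n) * ⟨w, hw⟩ ^ Ns) =
      ⟨x, hx⟩ ^ t1 * ⟨z, hz⟩ ^ Mt * (⟨y, hy⟩ ^ s1 * ⟨w, hw⟩ ^ Ns) *
        (⟨x, hx⟩ ^ m * ⟨y, hy⟩ ^ n) := by
    simp only [pow_add]
    simp only [mul_comm, mul_left_comm, mul_assoc]
  have := congrArg Subtype.val key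
  simpa using this

variable {H : Type*} [NormedAddCommGroup H] [InnerProductSpace ℂ H] [CompleteSpace H]

lemma omega_eq (A T : H →L[ℂ] H) (m n : ℕ) :
    Omega A T m n =
      ((LinearMap.mulLeft ℂ (adjoint T) * LinearMap.mulRight ℂ T - 1) ^ m *
       (LinearMap.mulLeft ℂ (adjoint T) - LinearMap.mulRight ℂ T) ^ n) A := by
  set a := LinearMap.mulLeft ℂ (adjoint T) with ha
  set b := LinearMap.mulRight ℂ T with hb
  have hab : Commute a b := LinearMap.commute_mulLeft_right _ _
  rw [exp_sub_aux (Commute.one_right (a * b)) m, exp_sub_aux hab n, Finset.sum_mul_sum]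
  unfold Omega
  simp only [LinearMap.sum_apply]
  refine Finset.sum_congr rfl fun j hj => ?_
  refine Finset.sum_congr rfl fun k hk => ?_
  have hj' : j ≤ m := by simpa [Nat.lt_succ_iff] using hj
  have hk' : k ≤ n := by simpa [Nat.lt_succ_iff] using hk
  rw [one_pow, mul_one, smul_mul_smul_comm, LinearMap.smul_apply]
  have hswap : b ^ j * a ^ k = a ^ k * b ^ j := ((hab.pow_pow k j).eq).symm
  have hprod : (a * b) ^ j * (a ^ k * b ^ (n - k)) = a ^ (j + k) * b ^ (j + (n - k)) := by
    rw [hab.mul_pow]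
    calc a ^ j * b ^ j * (a ^ k * b ^ (n - k))
        = a ^ j * (b ^ j * a ^ k) * b ^ (n - k) := by noncomm_ring
      _ = a ^ j * (a ^ k * b ^ j) * b ^ (n - k) := by rw [hswap]
      _ = a ^ (j + k) * b ^ (j + (n - k)) := by rw [pow_add, pow_add]; noncomm_ring
  rw [hprod, Module.End.mul_apply, ha, hb, LinearMap.pow_mulLeft, LinearMap.pow_mulRight,
    LinearMap.mulRight_apply, LinearMap.mulLeft_apply]
  have e1 : k + j = j + k := by omega
  have e2 : n + j - k = j + (n - k) := by omega
  have e3 : m + n - (j + k) = (m - j) + (n - k) := by omega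
  rw [e1, e2, e3]
  congr 1
  ring

end Aux

set_option maxHeartbeats 1000000 in
theorem isosymmetric_add_nilpotent {H : Type*} [NormedAddCommGroup H]
    [InnerProductSpace ℂ H] [CompleteSpace H] (A T Q : H →L[ℂ] H) (hA : A.IsPositive)
    (m n r : ℕ) (hr : 1 ≤ r)
    (hc1 : T ∘L Q = Q ∘L T) (hc2 : T ∘L (adjoint Q) = (adjoint Q) ∘L T)
    (hQ : Q ^ r = 0) (h : Omega A T m n = 0) :
    Omega A (T + Q) (m + 2 * r - 2) (n + 2 * r - 1) = 0 := by
  classical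
  set a := LinearMap.mulLeft ℂ (adjoint T) with ha
  set b := LinearMap.mulRight ℂ T with hb
  set p := LinearMap.mulLeft ℂ (adjoint Q) with hp
  set q := LinearMap.mulRight ℂ Q with hq
  have hTQ : T * Q = Q * T := by rw [mul_def, mul_def]; exact hc1
  have hadj : adjoint T * adjoint Q = adjoint Q * adjoint T := by
    rw [← star_eq_adjoint, ← star_eq_adjoint, ← star_mul, ← star_mul, hTQ]
  -- basic commutation relations
  have hab : Commute a b := LinearMap.commute_mulLeft_right _ _
  have haq : Commute a q := LinearMap.commute_mulLeft_right _ _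
  have hpb : Commute p b := LinearMap.commute_mulLeft_right _ _
  have hpq : Commute p q := LinearMap.commute_mulLeft_right _ _
  have hap : Commute a p := by
    show a * p = p * a
    rw [ha, hp, Module.End.mul_eq_comp, Module.End.mul_eq_comp, ← LinearMap.mulLeft_mul,
      ← LinearMap.mulLeft_mul, hadj]
  have hbq : Commute b q := by
    show b * q = q * b
    rw [hb, hq, Module.End.mul_eq_comp, Module.End.mul_eq_comp, ← LinearMap.mulRight_mul,
      ← LinearMap.mulRight_mul, hTQ]
  -- nilpotency
  have hpr : p ^ r = 0 := by
    rw [hp, LinearMap.pow_mulLeft]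
    have : (adjoint Q) ^ r = 0 := by
      rw [← star_eq_adjoint, ← star_pow, hQ, star_zero]
    rw [this]
    exact LinearMap.mulLeft_zero_eq_zero _ _
  have hqr : q ^ r = 0 := by
    rw [hq, LinearMap.pow_mulRight, hQ]
    exact LinearMap.mulRight_zero_eq_zero _ _
  set dT := a * b - 1 with hdT
  set sT := a - b with hsT
  set e := p - q with he
  set f := q * a + p * (b + q) with hf
  have hA0 : (dT ^ m * sT ^ n) A = 0 := by rw [← omega_eq]; exact h
  -- commutation relations among dT, sT, e, f
  have hd_ : ∀ u, Commute a u → Commute b u → Commute dT u := fun u h1 h2 =>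
    (h1.mul_left h2).sub_left (Commute.one_left u)
  have hs_ : ∀ u, Commute a u → Commute b u → Commute sT u := fun u h1 h2 => h1.sub_left h2
  have he_ : ∀ u, Commute p u → Commute q u → Commute e u := fun u h1 h2 => h1.sub_left h2
  have hf_ : ∀ u, Commute a u → Commute b u → Commute p u → Commute q u → Commute f u :=
    fun u h1 h2 h3 h4 => (h4.mul_left h1).add_left (h3.mul_left (h2.add_left h4))
  have cds : Commute dT sT :=
    hd_ _ ((Commute.refl a).sub_right hab) (hab.symm.sub_right (Commute.refl b))
  have cde : Commute dT e := hd_ _ (hap.sub_right haq) (hpb.symm.sub_right hbq)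
  have cdf : Commute dT f :=
    hd_ _ ((haq.mul_right (Commute.refl a)).add_right (hap.mul_right (hab.add_right haq)))
      ((hbq.mul_right (hab.symm)).add_right (hpb.symm.mul_right ((Commute.refl b).add_right hbq)))
  have cse : Commute sT e := hs_ _ (hap.sub_right haq) (hpb.symm.sub_right hbq)
  have csf : Commute sT f :=
    hs_ _ ((haq.mul_right (Commute.refl a)).add_right (hap.mul_right (hab.add_right haq)))
      ((hbq.mul_right (hab.symm)).add_right (hpb.symm.mul_right ((Commute.refl b).add_right hbq)))
  have cef : Commute e f :=
    he_ _ ((hpq.mul_right hap.symm).add_right ((Commute.refl p).mul_right (hpb.add_right hpq)))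
      (((Commute.refl q).mul_right haq.symm).add_right (hpq.symm.mul_right (hbq.symm.add_right (Commute.refl q))))
  -- expansion of the (T+Q)-operators
  have hdexp : LinearMap.mulLeft ℂ (adjoint (T + Q)) * LinearMap.mulRight ℂ (T + Q) - 1
      = dT + f := by
    have h1 : adjoint (T + Q) = adjoint T + adjoint Q := by
      rw [← star_eq_adjoint, ← star_eq_adjoint, ← star_eq_adjoint, star_add]
    have h2 : LinearMap.mulLeft ℂ (adjoint T + adjoint Q) = a + p :=
      LinearMap.ext fun z => add_mul _ _ _
    have h3 : LinearMap.mulRight ℂ (T + Q) = b + q :=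
      LinearMap.ext fun z => mul_add _ _ _
    rw [h1, h2, h3, hdT, hf]
    have : (a + p) * (b + q) = a * b + (a * q + (p * b + p * q)) := by noncomm_ring
    rw [this, haq.eq]
    noncomm_ring
  have hsexp : LinearMap.mulLeft ℂ (adjoint (T + Q)) - LinearMap.mulRight ℂ (T + Q)
      = sT + e := by
    have h1 : adjoint (T + Q) = adjoint T + adjoint Q := by
      rw [← star_eq_adjoint, ← star_eq_adjoint, ← star_eq_adjoint, star_add]
    have h2 : LinearMap.mulLeft ℂ (adjoint T + adjoint Q) = a + p :=
      LinearMap.ext fun z => add_mul _ _ _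
    have h3 : LinearMap.mulRight ℂ (T + Q) = b + q :=
      LinearMap.ext fun z => mul_add _ _ _
    rw [h1, h2, h3, hsT, he]
    abel
  -- nilpotency of e and f
  have he0 : e ^ (2 * r - 1) = 0 := by
    rw [he, exp_sub_aux hpq (2 * r - 1)]
    apply Finset.sum_eq_zero
    intro i hi
    rcases le_or_gt r i with hle | hlt
    · have : p ^ i = 0 := by
        rw [show i = r + (i - r) by omega, pow_add, hpr, zero_mul]
      rw [this, zero_mul, smul_zero]
    · have : q ^ (2 * r - 1 - i) = 0 := by
        rw [show 2 * r - 1 - i = r + (2 * r - 1 - i - r) by omega, pow_add, hqr, zero_mul]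
      rw [this, mul_zero, smul_zero]
  have hf0 : f ^ (2 * r - 1) = 0 := by
    have cuv : Commute (q * a) (p * (b + q)) :=
      (hpq.symm.mul_left hap).mul_right
        ((hbq.symm.mul_left hab).add_right ((Commute.refl q).mul_left haq))
    rw [hf, exp_add_aux cuv (2 * r - 1)]
    apply Finset.sum_eq_zero
    intro i hi
    rcases le_or_gt r i with hle | hlt
    · have : (q * a) ^ i = 0 := by
        rw [haq.symm.mul_pow, show i = r + (i - r) by omega, pow_add, hqr, zero_mul, zero_mul]
      rw [this, zero_mul, smul_zero]
    · have : (p * (b + q)) ^ (2 * r - 1 - i) = 0 := by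
        rw [(hpb.add_right hpq).mul_pow,
          show 2 * r - 1 - i = r + (2 * r - 1 - i - r) by omega, pow_add, hpr, zero_mul, zero_mul]
      rw [this, mul_zero, smul_zero]
  -- main computation
  rw [omega_eq, hdexp, hsexp, exp_add_aux cdf (m + 2 * r - 2), exp_add_aux cse (n + 2 * r - 1),
    Finset.sum_mul_sum]
  simp only [LinearMap.sum_apply]
  apply Finset.sum_eq_zero
  intro t ht
  apply Finset.sum_eq_zero
  intro s hs
  rw [Finset.mem_range, Nat.lt_succ_iff] at ht hs
  rw [smul_mul_smul_comm, LinearMap.smul_apply]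
  suffices hz : ((dT ^ t * f ^ (m + 2 * r - 2 - t)) * (sT ^ s * e ^ (n + 2 * r - 1 - s))) A = 0 by
    rw [hz, smul_zero]
  by_cases h1 : 2 * r - 1 ≤ m + 2 * r - 2 - t
  · have : f ^ (m + 2 * r - 2 - t) = 0 := by
      rw [show m + 2 * r - 2 - t = (2 * r - 1) + (m + 2 * r - 2 - t - (2 * r - 1)) by omega,
        pow_add, hf0, zero_mul]
    rw [this, mul_zero, zero_mul, LinearMap.zero_apply]
  by_cases h2 : 2 * r - 1 ≤ n + 2 * r - 1 - s
  · have : e ^ (n + 2 * r - 1 - s) = 0 := by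
      rw [show n + 2 * r - 1 - s = (2 * r - 1) + (n + 2 * r - 1 - s - (2 * r - 1)) by omega,
        pow_add, he0, zero_mul]
    rw [this, mul_zero, mul_zero, LinearMap.zero_apply]
  · have htm : m ≤ t := by omega
    have hsn : n ≤ s := by omega
    rw [show t = (t - m) + m by omega, show s = (s - n) + n by omega,
      comm_shuffle cds cdf cde csf cse cef.symm, Module.End.mul_apply, hA0, map_zero]
end
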